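/- arXiv:1710.01331 — 6 statements merged into one kernel-verified Lean document; each statement's English description precedes it below -/
import Mathlib

section
/- Let H be a real Hilbert space, L: H → H self-adjoint nonnegative, G: H → H self-adjoint nonpositive, all bounded linear operators. Let Δt > 0, b ∈ H with ‖b‖ arbitrary, r ∈ ℝ, and suppose φⁿ, φⁿ⁺¹, μⁿ⁺¹ ∈ H and rⁿ, rⁿ⁺¹ ∈ ℝ satisfy the first-order SAV scheme: (φⁿ⁺¹ − φⁿ)/Δt = G μⁿ⁺¹, μⁿ⁺¹ = L φⁿ⁺¹ + rⁿ⁺¹ b, and rⁿ⁺¹ − rⁿ = (1/2) ⟨b, φⁿ⁺¹ − φⁿ⟩. Then the discrete energy identity holds: [Ẽ(φⁿ⁺¹, rⁿ⁺¹) − Ẽ(φⁿ, rⁿ)] + (1/2)⟨φⁿ⁺¹ − φⁿ, L(φⁿ⁺¹ − φⁿ)⟩ + (rⁿ⁺¹ − rⁿ)² = Δt ⟨μⁿ⁺¹, G μⁿ⁺¹⟩, where Ẽ(φ, r) = (1/2)⟨φ, Lφ⟩ + r². In particular Ẽ(φⁿ⁺¹, rⁿ⁺¹) ≤ Ẽ(φⁿ,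 rⁿ). -/
open RealInnerProductSpace

theorem sav_first_order_discrete_energy_law
    {H : Type*} [NormedAddCommGroup H] [InnerProductSpace ℝ H] [CompleteSpace H]
    (L G : H →L[ℝ] H)
    (hLsa : ∀ x y : H, ⟪L x, y⟫ = ⟪x, L y⟫)
    (hLpos : ∀ ψ : H, 0 ≤ ⟪ψ, L ψ⟫)
    (hGsa : ∀ x y : H, ⟪G x, y⟫ = ⟪x, G y⟫)
    (hGneg : ∀ ψ : H, ⟪ψ, G ψ⟫ ≤ 0)
    (Δt : ℝ) (hΔt : 0 < Δt) (b : H) (φn φn1 μn1 : H) (rn rn1 : ℝ)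
    (hscheme1 : φn1 - φn = Δt • G μn1)
    (hscheme2 : μn1 = L φn1 + rn1 • b)
    (hscheme3 : rn1 - rn = (1 / 2 : ℝ) * ⟪b, φn1 - φn⟫) :
    ((1 / 2 : ℝ) * ⟪φn1, L φn1⟫ + rn1 ^ 2 - ((1 / 2 : ℝ) * ⟪φn, L φn⟫ + rn ^ 2))
        + (1 / 2 : ℝ) * ⟪φn1 - φn, L (φn1 - φn)⟫ + (rn1 - rn) ^ 2
      = Δt * ⟪μn1, G μn1⟫
    ∧ (1 / 2 : ℝ) * ⟪φn1, L φn1⟫ + rn1 ^ 2 ≤ (1 / 2 : ℝ) * ⟪φn, L φn⟫ + rn ^ 2 := by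
  have key : ⟪φn1 - φn, μn1⟫ = Δt * ⟪μn1, G μn1⟫ := by
    rw [hscheme1, real_inner_smul_left, hGsa]
  have expand : ⟪φn1 - φn, μn1⟫
      = ⟪φn1 - φn, L φn1⟫ + rn1 * ⟪φn1 - φn, b⟫ := by
    rw [hscheme2, inner_add_right, real_inner_smul_right]
  have hA : ⟪φn1 - φn, L φn1⟫
      = (1/2 : ℝ) * (⟪φn1, L φn1⟫ - ⟪φn, L φn⟫ + ⟪φn1 - φn, L (φn1 - φn)⟫) := by
    have h1 : ⟪φn, L φn1⟫ = ⟪φn1, L φn⟫ := by rw [← hLsa, real_inner_comm]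
    simp only [map_sub, inner_sub_left, inner_sub_right, h1]
    ring
  have hb : ⟪φn1 - φn, b⟫ = 2 * (rn1 - rn) := by
    rw [real_inner_comm, hscheme3]; ring
  have hB : rn1 * ⟪φn1 - φn, b⟫ = rn1 ^ 2 - rn ^ 2 + (rn1 - rn) ^ 2 := by
    rw [hb]; ring
  have main : ((1 / 2 : ℝ) * ⟪φn1, L φn1⟫ + rn1 ^ 2 - ((1 / 2 : ℝ) * ⟪φn, L φn⟫ + rn ^ 2))
        + (1 / 2 : ℝ) * ⟪φn1 - φn, L (φn1 - φn)⟫ + (rn1 - rn) ^ 2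
      = Δt * ⟪μn1, G μn1⟫ := by
    rw [← key, expand, hA, hB]; ring
  refine ⟨main, ?_⟩
  nlinarith [hGneg μn1, hLpos (φn1 - φn), sq_nonneg (rn1 - rn), mul_nonpos_of_nonneg_of_nonpos hΔt.le (hGneg μn1)]
end

section
/- Let H be a real Hilbert space, L self-adjoint nonnegative bounded linear, G self-adjoint nonpositive bounded linear. Suppose φⁿ, φⁿ⁺¹, μ ∈ H, rⁿ, rⁿ⁺¹ ∈ ℝ, b ∈ H, and Δt > 0 satisfy the Crank–Nicolson SAV scheme: (φⁿ⁺¹ − φⁿ)/Δt = Gμ, μ = (1/2) L(φⁿ⁺¹ + φⁿ) + ((rⁿ⁺¹ + rⁿ)/2) b, and rⁿ⁺¹ − rⁿ = (1/2)⟨b, φⁿ⁺¹ − φⁿ⟩. Then the modified energy Ẽ(φ, r) = (1/2)⟨φ, Lφ⟩ + r² satisfies the exact identity Ẽ(φⁿ⁺¹, rⁿ⁺¹) − Ẽ(φⁿ, rⁿ) = Δt ⟨μ, Gμ⟩, and hence Ẽ(φⁿ⁺¹, rⁿ⁺¹) ≤ Ẽ(φⁿ, rⁿ). -/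
open RealInnerProductSpace

theorem sav_crank_nicolson_discrete_energy_law
    {H : Type*} [NormedAddCommGroup H] [InnerProductSpace ℝ H] [CompleteSpace H]
    (L G : H →L[ℝ] H)
    (hLsa : ∀ x y : H, ⟪L x, y⟫ = ⟪x, L y⟫)
    (hLpos : ∀ ψ : H, 0 ≤ ⟪ψ, L ψ⟫)
    (hGsa : ∀ x y : H, ⟪G x, y⟫ = ⟪x, G y⟫)
    (hGneg : ∀ ψ : H, ⟪ψ, G ψ⟫ ≤ 0)
    (Δt : ℝ) (hΔt : 0 < Δt) (b : H) (φn φn1 μ : H) (rn rn1 : ℝ)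
    (hscheme1 : φn1 - φn = Δt • G μ)
    (hscheme2 : μ = (1 / 2 : ℝ) • L (φn1 + φn) + ((rn1 + rn) / 2) • b)
    (hscheme3 : rn1 - rn = (1 / 2 : ℝ) * ⟪b, φn1 - φn⟫) :
    ((1 / 2 : ℝ) * ⟪φn1, L φn1⟫ + rn1 ^ 2) - ((1 / 2 : ℝ) * ⟪φn, L φn⟫ + rn ^ 2)
      = Δt * ⟪μ, G μ⟫
    ∧ (1 / 2 : ℝ) * ⟪φn1, L φn1⟫ + rn1 ^ 2 ≤ (1 / 2 : ℝ) * ⟪φn, L φn⟫ + rn ^ 2 := by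
  have hkey : ⟪μ, φn1 - φn⟫ = Δt * ⟪μ, G μ⟫ := by
    rw [hscheme1, real_inner_smul_right]
  have hL : ⟪L (φn1 + φn), φn1 - φn⟫ = ⟪φn1, L φn1⟫ - ⟪φn, L φn⟫ := by
    have hcross : ⟪L φn1, φn⟫ = ⟪L φn, φn1⟫ := by
      rw [hLsa, real_inner_comm]
    simp only [map_add, inner_add_left, inner_sub_right]
    rw [real_inner_comm (L φn1) φn1, real_inner_comm (L φn) φn] <;> try ring
    all_goals (try (rw [hcross]; ring))
  have hexp : ⟪μ, φn1 - φn⟫ =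
      (1 / 2 : ℝ) * (⟪φn1, L φn1⟫ - ⟪φn, L φn⟫) + (rn1 + rn) / 2 * ⟪b, φn1 - φn⟫ := by
    rw [hscheme2, inner_add_left, real_inner_smul_left, real_inner_smul_left, hL]
  have hr : (rn1 + rn) / 2 * ⟪b, φn1 - φn⟫ = rn1 ^ 2 - rn ^ 2 := by
    have : ⟪b, φn1 - φn⟫ = 2 * (rn1 - rn) := by rw [hscheme3]; ring
    rw [this]; ring
  have hid : ((1 / 2 : ℝ) * ⟪φn1, L φn1⟫ + rn1 ^ 2) - ((1 / 2 : ℝ) * ⟪φn, L φn⟫ + rn ^ 2)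
      = Δt * ⟪μ, G μ⟫ := by
    rw [← hkey, hexp, hr]; ring
  refine ⟨hid, ?_⟩
  nlinarith [hGneg μ, hΔt.le, mul_nonneg hΔt.le (neg_nonneg.mpr (hGneg μ))]
end

section
/- Let H be a real Hilbert space, L self-adjoint nonnegative, G self-adjoint nonpositive bounded linear operators on H, and b ∈ H fixed. Suppose (φⁿ⁻¹, φⁿ, φⁿ⁺¹) in H, (rⁿ⁻¹, rⁿ, rⁿ⁺¹) in ℝ, μ ∈ H, and Δt > 0 satisfy the SAV/BDF2 scheme: (3φⁿ⁺¹ − 4φⁿ + φⁿ⁻¹)/(2Δt) = Gμ, μ = Lφⁿ⁺¹ + rⁿ⁺¹ b, and 3rⁿ⁺¹ − 4rⁿ + rⁿ⁻¹ = (1/2)⟨b, 3φⁿ⁺¹ − 4φⁿ + φⁿ⁻¹⟩. Define the BDF2 modified energy Ẽ[(φ', r'), (φ, r)] = (1/4)(⟨φ', Lφ'⟩ + ⟨2φ' − φ, L(2φ' − φ)⟩) + (1/2)((r')² + (2r' − r)²). Then Ẽ[(φⁿ⁺¹, rⁿ⁺¹), (φⁿ, rⁿ)] − Ẽ[(φⁿ,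 rⁿ), (φⁿ⁻¹, rⁿ⁻¹)] + (1/4)⟨φⁿ⁺¹ − 2φⁿ + φⁿ⁻¹, L(φⁿ⁺¹ − 2φⁿ + φⁿ⁻¹)⟩ + (1/2)(rⁿ⁺¹ − 2rⁿ + rⁿ⁻¹)² = Δt ⟨μ, Gμ⟩. In particular the modified energy is non-increasing. -/
open RealInnerProductSpace

theorem sav_bdf2_discrete_energy_law
    {H : Type*} [NormedAddCommGroup H] [InnerProductSpace ℝ H] [CompleteSpace H]
    (L G : H →L[ℝ] H)
    (hLsa : ∀ x y : H, ⟪L x, y⟫ = ⟪x, L y⟫)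
    (hLpos : ∀ ψ : H, 0 ≤ ⟪ψ, L ψ⟫)
    (hGsa : ∀ x y : H, ⟪G x, y⟫ = ⟪x, G y⟫)
    (hGneg : ∀ ψ : H, ⟪ψ, G ψ⟫ ≤ 0)
    (b : H) (Δt : ℝ) (hΔt : 0 < Δt)
    (φ0 φ1 φ2 μ : H) (r0 r1 r2 : ℝ)
    (hscheme1 : (3 : ℝ) • φ2 - (4 : ℝ) • φ1 + φ0 = (2 * Δt) • G μ)
    (hscheme2 : μ = L φ2 + r2 • b)
    (hscheme3 : 3 * r2 - 4 * r1 + r0 = (1 / 2 : ℝ) * ⟪b, (3 : ℝ) • φ2 - (4 : ℝ) • φ1 + φ0⟫)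
    (Etil : H × ℝ → H × ℝ → ℝ)
    (hEtil : ∀ p q : H × ℝ, Etil p q
        = (1 / 4 : ℝ) * (⟪p.1, L p.1⟫ + ⟪(2 : ℝ) • p.1 - q.1, L ((2 : ℝ) • p.1 - q.1)⟫)
          + (1 / 2 : ℝ) * (p.2 ^ 2 + (2 * p.2 - q.2) ^ 2)) :
    Etil (φ2, r2) (φ1, r1) - Etil (φ1, r1) (φ0, r0)
        + (1 / 4 : ℝ) * ⟪φ2 - (2 : ℝ) • φ1 + φ0, L (φ2 - (2 : ℝ) • φ1 + φ0)⟫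
        + (1 / 2 : ℝ) * (r2 - 2 * r1 + r0) ^ 2
      = Δt * ⟪μ, G μ⟫
    ∧ Etil (φ2, r2) (φ1, r1) ≤ Etil (φ1, r1) (φ0, r0) := by
  have hsym : ∀ x y : H, ⟪x, L y⟫ = ⟪y, L x⟫ := fun x y => by
    rw [← hLsa, real_inner_comm]
  have h1 : ⟪μ, (3 : ℝ) • φ2 - (4 : ℝ) • φ1 + φ0⟫ = 2 * Δt * ⟪μ, G μ⟫ := by
    rw [hscheme1, real_inner_smul_right]
  have hbd : ⟪b, (3 : ℝ) • φ2 - (4 : ℝ) • φ1 + φ0⟫ = 2 * (3 * r2 - 4 * r1 + r0) := by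
    linarith
  have h2 : ⟪μ, (3 : ℝ) • φ2 - (4 : ℝ) • φ1 + φ0⟫
      = (3 * ⟪φ2, L φ2⟫ - 4 * ⟪φ1, L φ2⟫ + ⟪φ0, L φ2⟫) + 2 * r2 * (3 * r2 - 4 * r1 + r0) := by
    rw [hscheme2]
    simp only [inner_sub_right, inner_add_right, real_inner_smul_right] at hbd
    simp only [inner_add_left, real_inner_smul_left, inner_sub_right, inner_add_right,
      real_inner_smul_right, map_smul, hLsa]
    rw [hsym φ2 φ1, hsym φ2 φ0]
    linear_combination r2 * hbd
  have key : 2 * Δt * ⟪μ, G μ⟫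
      = (3 * ⟪φ2, L φ2⟫ - 4 * ⟪φ1, L φ2⟫ + ⟪φ0, L φ2⟫) + 2 * r2 * (3 * r2 - 4 * r1 + r0) := by
    rw [← h1, h2]
  have main : Etil (φ2, r2) (φ1, r1) - Etil (φ1, r1) (φ0, r0)
        + (1 / 4 : ℝ) * ⟪φ2 - (2 : ℝ) • φ1 + φ0, L (φ2 - (2 : ℝ) • φ1 + φ0)⟫
        + (1 / 2 : ℝ) * (r2 - 2 * r1 + r0) ^ 2
      = Δt * ⟪μ, G μ⟫ := by
    simp only [hEtil]
    simp only [map_sub, map_add, map_smul, inner_sub_left, inner_sub_right, inner_add_left,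
      inner_add_right, real_inner_smul_left, real_inner_smul_right]
    simp only [hsym φ1 φ2, hsym φ0 φ2, hsym φ0 φ1] at key ⊢
    linear_combination (-1 / 2 : ℝ) * key
  refine ⟨main, ?_⟩
  have hG := hGneg μ
  have hL := hLpos (φ2 - (2 : ℝ) • φ1 + φ0)
  nlinarith [sq_nonneg (r2 - 2 * r1 + r0), hΔt]
end

section
/- Let H be a real Hilbert space, G a self-adjoint negative-definite bounded linear operator on H (i.e., invertible with ⟨ψ, Gψ⟩ < 0 for ψ ≠ 0), L a self-adjoint nonnegative bounded linear operator, and Δt > 0 such that I − Δt G L is invertible. Then for any b ∈ H with b ≠ 0, the quantity γ = −⟨b, (I − Δt G L)⁻¹ G b⟩ satisfies γ = ⟨b, (−G⁻¹ + Δt L)⁻¹ b⟩ > 0. -/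
open RealInnerProductSpace

theorem sav_gamma_positive
    {H : Type*} [NormedAddCommGroup H] [InnerProductSpace ℝ H] [CompleteSpace H]
    (G L Ginv T M : H →L[ℝ] H) (Δt : ℝ) (hΔt : 0 < Δt)
    (hGsa : ∀ x y : H, ⟪G x, y⟫ = ⟪x, G y⟫)
    (hGneg : ∀ ψ : H, ψ ≠ 0 → ⟪ψ, G ψ⟫ < 0)
    (hLsa : ∀ x y : H, ⟪L x, y⟫ = ⟪x, L y⟫)
    (hLpos : ∀ ψ : H, 0 ≤ ⟪ψ, L ψ⟫)
    (hGinv1 : G ∘L Ginv = 1) (hGinv2 : Ginv ∘L G = 1)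
    (hT1 : (1 - Δt • (G ∘L L)) ∘L T = 1) (hT2 : T ∘L (1 - Δt • (G ∘L L)) = 1)
    (hM1 : (-Ginv + Δt • L) ∘L M = 1) (hM2 : M ∘L (-Ginv + Δt • L) = 1)
    (b : H) (hb : b ≠ 0) :
    -⟪b, T (G b)⟫ = ⟪b, M b⟫ ∧ 0 < -⟪b, T (G b)⟫ := by
  -- pointwise versions of the inverse identities
  have hGinv1' : ∀ y : H, G (Ginv y) = y := fun y => by
    have := congrArg (fun A : H →L[ℝ] H => A y) hGinv1; simpa using this
  have hGinv2' : ∀ y : H, Ginv (G y) = y := fun y => by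
    have := congrArg (fun A : H →L[ℝ] H => A y) hGinv2; simpa using this
  have hT1' : ∀ y : H, T y - Δt • G (L (T y)) = y := fun y => by
    have := congrArg (fun A : H →L[ℝ] H => A y) hT1; simpa using this
  have hM1' : ∀ y : H, -Ginv (M y) + Δt • L (M y) = y := fun y => by
    have := congrArg (fun A : H →L[ℝ] H => A y) hM1; simpa using this
  have hM2' : ∀ y : H, M (-Ginv y + Δt • L y) = y := fun y => by
    have := congrArg (fun A : H →L[ℝ] H => A y) hM2; simpa using this
  -- key identity : T (G b) = - M b
  have hkey : T (G b) = -(M b) := by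
    have h1 : Ginv (T (G b)) - Δt • L (T (G b)) = b := by
      have h := congrArg Ginv (hT1' (G b))
      rw [map_sub, map_smul, hGinv2', hGinv2'] at h
      exact h
    have h2 : -Ginv (-(T (G b))) + Δt • L (-(T (G b))) = b := by
      rw [map_neg, map_neg, neg_neg, smul_neg, ← sub_eq_add_neg]
      exact h1
    have := congrArg M h2
    rw [hM2'] at this
    rw [← this, neg_neg]
  have heq : -⟪b, T (G b)⟫ = ⟪b, M b⟫ := by
    rw [hkey, inner_neg_right, neg_neg]
  refine ⟨heq, ?_⟩
  rw [heq]
  set x := M b with hx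
  have hbx : -Ginv x + Δt • L x = b := hM1' b
  have hxne : x ≠ 0 := by
    intro h
    apply hb
    rw [← hbx, h]
    simp
  -- ⟪x, Ginv x⟫ < 0
  have hGinvneg : ⟪x, Ginv x⟫ < 0 := by
    have hφ : Ginv x ≠ 0 := by
      intro h
      apply hxne
      have := hGinv1' x
      rw [h, map_zero] at this
      exact this.symm
    have := hGneg (Ginv x) hφ
    calc ⟪x, Ginv x⟫ = ⟪G (Ginv x), Ginv x⟫ := by rw [hGinv1']
      _ = ⟪Ginv x, G (Ginv x)⟫ := real_inner_comm _ _
      _ < 0 := this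
  have hcomp : ⟪b, x⟫ = -⟪x, Ginv x⟫ + Δt * ⟪x, L x⟫ := by
    rw [← hbx]
    rw [real_inner_comm]
    rw [inner_add_right, inner_neg_right, real_inner_smul_right]
  rw [show ⟪b, M b⟫ = ⟪b, x⟫ from rfl, hcomp]
  have h1 : 0 < -⟪x, Ginv x⟫ := by linarith
  have h2 : 0 ≤ Δt * ⟪x, L x⟫ := mul_nonneg hΔt.le (hLpos x)
  linarith
end

section
/- Let H be a real Hilbert space, G self-adjoint nonpositive, and let E = E_c − E_e with E_c, E_e convex Fréchet-differentiable functionals on H. Suppose φⁿ, φⁿ⁺¹ ∈ H and Δt > 0 satisfy the convex splitting scheme (φⁿ⁺¹ − φⁿ)/Δt = G(E_c'[φⁿ⁺¹] − E_e'[φⁿ]). If G is invertible (negative definite), then E[φⁿ⁺¹] ≤ E[φⁿ]. -/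
open RealInnerProductSpace

private lemma convex_gradient_ineq
    {H : Type*} [NormedAddCommGroup H] [InnerProductSpace ℝ H] [CompleteSpace H]
    (f : H → ℝ) (g x y : H) (hc : ConvexOn ℝ Set.univ f)
    (hg : HasGradientAt f g x) : f x + ⟪g, y - x⟫ ≤ f y := by
  set F : ℝ → ℝ := fun t => f (x + t • (y - x)) with hF
  have hline : HasDerivAt (fun t : ℝ => x + t • (y - x)) (y - x) 0 := by
    simpa using ((hasDerivAt_id (0 : ℝ)).smul_const (y - x)).const_add x
  have hfd : HasFDerivAt f ((InnerProductSpace.toDual ℝ H g : H →L[ℝ] ℝ)) x := hg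
  have hFd : HasDerivAt F ⟪g, y - x⟫ 0 := by
    have hfd' : HasFDerivAt f ((InnerProductSpace.toDual ℝ H g : H →L[ℝ] ℝ))
        (x + (0 : ℝ) • (y - x)) := by simpa using hfd
    have h := hfd'.comp_hasDerivAt (0 : ℝ) hline
    simpa [hF, InnerProductSpace.toDual_apply_apply, Function.comp_def] using h
  have hslope : Filter.Tendsto (slope F 0) (nhdsWithin 0 {(0:ℝ)}ᶜ) (nhds ⟪g, y - x⟫) :=
    hasDerivAt_iff_tendsto_slope.mp hFd
  have hslope' : Filter.Tendsto (slope F 0) (nhdsWithin 0 (Set.Ioi (0:ℝ))) (nhds ⟪g, y - x⟫) :=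
    hslope.mono_left (nhdsWithin_mono _ (fun t ht => ne_of_gt ht))
  have hbound : ∀ t ∈ Set.Ioo (0:ℝ) 1, slope F 0 t ≤ f y - f x := by
    intro t ht
    have h01 : (0:ℝ) ≤ 1 - t := by linarith [ht.2]
    have h02 : (0:ℝ) ≤ t := le_of_lt ht.1
    have hsum : (1 - t) + t = 1 := by ring
    have hconv := hc.2 (Set.mem_univ x) (Set.mem_univ y) h01 h02 hsum
    have heq : (1 - t) • x + t • y = x + t • (y - x) := by
      rw [sub_smul, one_smul, smul_sub]; abel
    rw [heq] at hconv
    simp only [smul_eq_mul] at hconv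
    have hFt : F t - F 0 ≤ t * (f y - f x) := by
      simp only [hF, zero_smul, add_zero]
      calc f (x + t • (y - x)) - f x ≤ (1 - t) * f x + t * f y - f x := by linarith
        _ = t * (f y - f x) := by ring
    have : slope F 0 t = (F t - F 0) / t := by simp [slope_def_field, div_eq_inv_mul]
    rw [this]
    rw [div_le_iff₀ ht.1]
    linarith [hFt]
  have hev : ∀ᶠ t in nhdsWithin 0 (Set.Ioi (0:ℝ)), slope F 0 t ≤ f y - f x := by
    filter_upwards [Ioo_mem_nhdsGT_of_mem (by norm_num : (0:ℝ) ∈ Set.Ico (0:ℝ) 1)] with t ht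
    exact hbound t ht
  have : ⟪g, y - x⟫ ≤ f y - f x :=
    le_of_tendsto hslope' hev
  linarith

theorem convex_splitting_energy_stable
    {H : Type*} [NormedAddCommGroup H] [InnerProductSpace ℝ H] [CompleteSpace H]
    (G Ginv : H →L[ℝ] H)
    (hGsa : ∀ x y : H, ⟪G x, y⟫ = ⟪x, G y⟫)
    (hGneg : ∀ ψ : H, ⟪ψ, G ψ⟫ ≤ 0)
    (hGinv1 : G ∘L Ginv = 1) (hGinv2 : Ginv ∘L G = 1)
    (Ec Ee : H → ℝ) (Uc Ue : H → H)
    (hEcconv : ConvexOn ℝ Set.univ Ec) (hEeconv : ConvexOn ℝ Set.univ Ee)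
    (hUc : ∀ x, HasGradientAt Ec (Uc x) x)
    (hUe : ∀ x, HasGradientAt Ee (Ue x) x)
    (Δt : ℝ) (hΔt : 0 < Δt) (φn φn1 : H)
    (hscheme : φn1 - φn = Δt • G (Uc φn1 - Ue φn)) :
    Ec φn1 - Ee φn1 ≤ Ec φn - Ee φn := by
  have h1 : Ec φn1 + ⟪Uc φn1, φn - φn1⟫ ≤ Ec φn :=
    convex_gradient_ineq Ec (Uc φn1) φn1 φn hEcconv (hUc φn1)
  have h2 : Ee φn + ⟪Ue φn, φn1 - φn⟫ ≤ Ee φn1 :=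
    convex_gradient_ineq Ee (Ue φn) φn φn1 hEeconv (hUe φn)
  set u := Uc φn1 - Ue φn with hu
  have hkey : ⟪u, φn1 - φn⟫ ≤ 0 := by
    rw [hscheme]
    rw [real_inner_smul_right]
    exact mul_nonpos_of_nonneg_of_nonpos (le_of_lt hΔt) (hGneg u)
  have hsplit : ⟪u, φn1 - φn⟫ = -⟪Uc φn1, φn - φn1⟫ - ⟪Ue φn, φn1 - φn⟫ := by
    rw [hu, inner_sub_left]
    have : φn - φn1 = -(φn1 - φn) := by abel
    rw [this, inner_neg_right]
    ring
  rw [hsplit] at hkey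
  linarith
end

section
/- For any real symmetric traceless 3×3 matrix Q, the inequality |tr(Q³)| ≤ (1/√6) (tr(Q²))^{3/2} holds. -/
open Matrix

lemma key (a b c : ℝ) (h : a+b+c = 0) :
    |a^3+b^3+c^3| ≤ 1 / Real.sqrt 6 * Real.sqrt (a^2+b^2+c^2) ^ 3 := by
  have hs : (0:ℝ) ≤ a^2+b^2+c^2 := by positivity
  have hc : c = -a-b := by linarith
  subst hc
  have key2 : (a^3+b^3+(-a-b)^3)^2 * 6 ≤ (a^2+b^2+(-a-b)^2)^3 := by
    nlinarith [sq_nonneg ((a-b)*(2*a+b)*(a+2*b)), sq_nonneg (a+b), sq_nonneg (a-b)]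
  have hcube : Real.sqrt (a^2+b^2+(-a-b)^2) ^ 3 = Real.sqrt ((a^2+b^2+(-a-b)^2)^3) := by
    rw [pow_three, pow_three, ← Real.sqrt_mul hs, ← Real.sqrt_mul]
    positivity
  rw [← Real.sqrt_sq_eq_abs, hcube]
  have h6 : (0:ℝ) < Real.sqrt 6 := Real.sqrt_pos.mpr (by norm_num)
  have step1 : Real.sqrt ((a^3+b^3+(-a-b)^3)^2) ≤ Real.sqrt ((a^2+b^2+(-a-b)^2)^3 / 6) :=
    Real.sqrt_le_sqrt (by linarith)
  have step2 : Real.sqrt ((a^2+b^2+(-a-b)^2)^3 / 6) = 1 / Real.sqrt 6 * Real.sqrt ((a^2+b^2+(-a-b)^2)^3) := by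
    rw [Real.sqrt_div (by positivity)]; ring
  linarith [step1, step2.le, step2.ge]

theorem traceless_symmetric_cubic_bound
    (Q : Matrix (Fin 3) (Fin 3) ℝ) (hsymm : Qᵀ = Q) (htr : Q.trace = 0) :
    |(Q * Q * Q).trace| ≤ (1 / Real.sqrt 6) * (Real.sqrt ((Q * Q).trace)) ^ 3 := by
  have hQ : Q.IsHermitian := by
    simpa [Matrix.IsHermitian, Matrix.conjTranspose_eq_transpose_of_trivial] using hsymm
  set U : Matrix (Fin 3) (Fin 3) ℝ := (hQ.eigenvectorUnitary : Matrix (Fin 3) (Fin 3) ℝ) with hU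
  set D : Matrix (Fin 3) (Fin 3) ℝ := diagonal (RCLike.ofReal ∘ hQ.eigenvalues) with hD
  have hst : star U * U = 1 := (Matrix.mem_unitaryGroup_iff').mp hQ.eigenvectorUnitary.2
  have hspec : Q = U * D * star U := hQ.spectral_theorem
  have h1 : Q.trace = D.trace := by
    rw [hspec, Matrix.trace_mul_comm, ← mul_assoc, hst, one_mul]
  have h2 : (Q * Q).trace = (D * D).trace := by
    rw [hspec]
    rw [show U * D * star U * (U * D * star U) = U * (D * (star U * U) * D) * star U by
      noncomm_ring]
    rw [hst, mul_one, Matrix.trace_mul_comm, ← mul_assoc, hst, one_mul]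
  have h3 : (Q * Q * Q).trace = (D * D * D).trace := by
    rw [hspec]
    rw [show U * D * star U * (U * D * star U) * (U * D * star U)
        = U * (D * (star U * U) * D * (star U * U) * D) * star U by noncomm_ring]
    rw [hst, mul_one, mul_one, Matrix.trace_mul_comm, ← mul_assoc, hst, one_mul]
  have htr' : hQ.eigenvalues 0 + hQ.eigenvalues 1 + hQ.eigenvalues 2 = 0 := by
    have := h1.symm.trans htr
    simpa [hD, trace, Matrix.diag, Fin.sum_univ_three] using this
  rw [h2, h3]
  have hDD : (D * D).trace = (hQ.eigenvalues 0)^2 + (hQ.eigenvalues 1)^2 + (hQ.eigenvalues 2)^2 := by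
    simp [hD, diagonal_mul_diagonal, trace, Matrix.diag, Fin.sum_univ_three]; ring
  have hDDD : (D * D * D).trace = (hQ.eigenvalues 0)^3 + (hQ.eigenvalues 1)^3 + (hQ.eigenvalues 2)^3 := by
    simp [hD, diagonal_mul_diagonal, trace, Matrix.diag, Fin.sum_univ_three]; ring
  rw [hDD, hDDD]
  exact key _ _ _ htr'
end
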